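/- For every a in a finite group Γ, Atom(a) equals the cyclic subgroup ⟨a⟩ with the union of all proper subgroups of ⟨a⟩ removed; in particular Atom(a) belongs to B(Γ). -/

import Mathlib

open Pointwise

/-- The Boolean algebra of subsets of `Γ` generated by the subgroups of `Γ`. -/
inductive InB (Γ : Type*) [AddGroup Γ] : Set Γ → Prop
  | subgroup (H : AddSubgroup Γ) : InB Γ (H : Set Γ)
  | compl {S : Set Γ} : InB Γ S → InB Γ Sᶜ
  | union {S T : Set Γ} : InB Γ S → InB Γ T → InB Γ (S ∪ T)

/-- `Atom a` is the set of elements generating the same cyclic subgroup as `a`. -/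
def Atom {Γ : Type*} [AddGroup Γ] (a : Γ) : Set Γ :=
  {b | AddSubgroup.zmultiples a = AddSubgroup.zmultiples b}

lemma InB.empty (Γ : Type*) [AddGroup Γ] : InB Γ (∅ : Set Γ) := by
  have h := (InB.subgroup (Γ := Γ) ⊤).compl
  simpa using h

lemma InB.inter {Γ : Type*} [AddGroup Γ] {S T : Set Γ} (hS : InB Γ S) (hT : InB Γ T) :
    InB Γ (S ∩ T) := by
  have h := (hS.compl.union hT.compl).compl
  simpa [Set.compl_union] using h

lemma InB.biUnion {Γ : Type*} [AddGroup Γ] {s : Set (AddSubgroup Γ)} (hs : s.Finite) :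
    InB Γ (⋃ H ∈ s, (H : Set Γ)) := by
  refine Set.Finite.induction_on (motive := fun (s : Set (AddSubgroup Γ)) _ => InB Γ (⋃ H ∈ s, (H : Set Γ))) s hs ?_ ?_
  · simpa using InB.empty Γ
  · intro K s hK hsf ih
    rw [Set.biUnion_insert]
    exact (InB.subgroup _).union ih

theorem atom_eq_zmultiples_sdiff_properSubgroups {Γ : Type*} [AddGroup Γ] [Fintype Γ] (a : Γ) :
    (Atom a = (AddSubgroup.zmultiples a : Set Γ) \
      ⋃ (H : AddSubgroup Γ) (_ : H < AddSubgroup.zmultiples a), (H : Set Γ)) ∧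
    InB Γ (Atom a) := by
  have heq : Atom a = (AddSubgroup.zmultiples a : Set Γ) \
      ⋃ (H : AddSubgroup Γ) (_ : H < AddSubgroup.zmultiples a), (H : Set Γ) := by
    ext b
    simp only [Atom, Set.mem_setOf_eq, Set.mem_diff, Set.mem_iUnion, not_exists,
      SetLike.mem_coe]
    constructor
    · intro h
      refine ⟨h ▸ AddSubgroup.mem_zmultiples b, ?_⟩
      intro H hH hbH
      have : AddSubgroup.zmultiples b ≤ H := (AddSubgroup.zmultiples_le).2 hbH
      exact absurd (lt_of_le_of_lt (h ▸ this) hH) (lt_irrefl _)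
    · rintro ⟨hb, hH⟩
      have hle : AddSubgroup.zmultiples b ≤ AddSubgroup.zmultiples a :=
        (AddSubgroup.zmultiples_le).2 hb
      rcases hle.lt_or_eq with hlt | he
      · exact absurd (AddSubgroup.mem_zmultiples b) (hH _ hlt)
      · exact he.symm
  refine ⟨heq, ?_⟩
  rw [heq]
  have hU : InB Γ (⋃ (H : AddSubgroup Γ) (_ : H < AddSubgroup.zmultiples a), (H : Set Γ)) := by
    have : (⋃ (H : AddSubgroup Γ) (_ : H < AddSubgroup.zmultiples a), (H : Set Γ)) =
        ⋃ H ∈ {H : AddSubgroup Γ | H < AddSubgroup.zmultiples a}, (H : Set Γ) := rfl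
    rw [this]
    exact InB.biUnion (Set.toFinite _)
  simpa [Set.diff_eq] using (InB.subgroup (AddSubgroup.zmultiples a)).inter hU.compl
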